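/- Replacement for evaluation contexts: if D is a derivation of Γ₁, Γ₂ ⊢ E[M] : T, D′ is a subderivation of D concluding Γ₂ ⊢ M : U whose position in D corresponds to the hole of E, Γ₃ ⊢ N : U, and the concatenation Γ₁, Γ₃ is defined, then Γ₁, Γ₃ ⊢ E[N] : T. -/
import Mathlib

set_option autoImplicit true
set_option maxHeartbeats 1000000

/-! ## HGV types and session types -/

mutual
inductive STy : Type
  | send : Ty → STy → STy      -- !T.S
  | recv : Ty → STy → STy      -- ?T.S
  | ends : STy                 -- end!
  | endr : STy                 -- end?
inductive Ty : Type
  | unit : Ty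
  | void : Ty
  | fn   : Ty → Ty → Ty        -- T ⊸ U
  | prod : Ty → Ty → Ty
  | sum  : Ty → Ty → Ty
  | sess : STy → Ty
end

/-- Session type duality. -/
def STy.dual : STy → STy
  | .send T S => .recv T S.dual
  | .recv T S => .send T S.dual
  | .ends => .endr
  | .endr => .ends

/-! ## HGV terms -/

inductive Term : Type
  | var : String → Term
  | unit : Term
  | lam : String → Term → Term
  | app : Term → Term → Term
  | letu : Term → Term → Term                    -- let () = M in N
  | pair : Term → Term → Term
  | letp : String → String → Term → Term → Term  -- let (x,y) = M in N
  | inl : Term → Term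
  | inr : Term → Term
  | case : Term → String → Term → String → Term → Term
  | absurd : Term → Term
  | fork : Term
  | send : Term
  | recv : Term
  | wait : Term
  | link : Term

inductive IsValue : Term → Prop
  | var : IsValue (.var x)
  | unit : IsValue .unit
  | lam : IsValue (.lam x M)
  | pair : IsValue V → IsValue W → IsValue (.pair V W)
  | inl : IsValue V → IsValue (.inl V)
  | inr : IsValue V → IsValue (.inr V)
  | fork : IsValue .fork
  | send : IsValue .send
  | recv : IsValue .recv
  | wait : IsValue .wait
  | link : IsValue .link

/-- Free variables of a term. -/
def Term.fv : Term → List String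
  | .var x => [x]
  | .unit => []
  | .lam x M => M.fv.filter (fun y => y != x)
  | .app M N => M.fv ++ N.fv
  | .letu M N => M.fv ++ N.fv
  | .pair M N => M.fv ++ N.fv
  | .letp x y M N => M.fv ++ N.fv.filter (fun z => z != x && z != y)
  | .inl M => M.fv
  | .inr M => M.fv
  | .case L x M y N => L.fv ++ M.fv.filter (fun z => z != x) ++ N.fv.filter (fun z => z != y)
  | .absurd M => M.fv
  | .fork => []
  | .send => []
  | .recv => []
  | .wait => []
  | .link => []

/-- Substitution of `N` for the variable `x` (capture is avoided by not
descending under binders that shadow `x`). -/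
def Term.subst (N : Term) (x : String) : Term → Term
  | .var y => if y = x then N else .var y
  | .unit => .unit
  | .lam y M => .lam y (if y = x then M else Term.subst N x M)
  | .app M₁ M₂ => .app (Term.subst N x M₁) (Term.subst N x M₂)
  | .letu M₁ M₂ => .letu (Term.subst N x M₁) (Term.subst N x M₂)
  | .pair M₁ M₂ => .pair (Term.subst N x M₁) (Term.subst N x M₂)
  | .letp y z M₁ M₂ => .letp y z (Term.subst N x M₁) (if y = x ∨ z = x then M₂ else Term.subst N x M₂)
  | .inl M => .inl (Term.subst N x M)
  | .inr M => .inr (Term.subst N x M)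
  | .case L y M₁ z M₂ =>
      .case (Term.subst N x L) y (if y = x then M₁ else Term.subst N x M₁)
        z (if z = x then M₂ else Term.subst N x M₂)
  | .absurd M => .absurd (Term.subst N x M)
  | .fork => .fork
  | .send => .send
  | .recv => .recv
  | .wait => .wait
  | .link => .link

/-! ## Linear type environments -/

abbrev Env := List (String × Ty)

/-- `Γ, Δ` is defined only when the domains are disjoint. -/
def Env.disj (Γ Δ : Env) : Prop := ∀ x T U, (x, T) ∈ Γ → (x, U) ∈ Δ → False

def Env.dom (Γ : Env) : List String := Γ.map Prod.fst

/-! ## Term typing -/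

inductive HasType : Env → Term → Ty → Prop
  | var : HasType [(x, T)] (.var x) T
  | unit : HasType [] .unit .unit
  | lam : HasType ((x, T) :: Γ) M U → HasType Γ (.lam x M) (.fn T U)
  | app : Env.disj Γ Δ → HasType Γ M (.fn T U) → HasType Δ N T →
      HasType (Γ ++ Δ) (.app M N) U
  | letu : Env.disj Γ Δ → HasType Γ M .unit → HasType Δ N T →
      HasType (Γ ++ Δ) (.letu M N) T
  | pair : Env.disj Γ Δ → HasType Γ M T → HasType Δ N U →
      HasType (Γ ++ Δ) (.pair M N) (.prod T U)
  | letp : Env.disj Γ Δ → HasType Γ M (.prod T T') →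
      HasType ((x, T) :: (y, T') :: Δ) N U →
      HasType (Γ ++ Δ) (.letp x y M N) U
  | inl : HasType Γ M T → HasType Γ (.inl M) (.sum T U)
  | inr : HasType Γ M U → HasType Γ (.inr M) (.sum T U)
  | case : Env.disj Γ Δ → HasType Γ L (.sum T T') →
      HasType ((x, T) :: Δ) M U → HasType ((y, T') :: Δ) N U →
      HasType (Γ ++ Δ) (.case L x M y N) U
  | absurd : Env.disj Γ Δ → HasType Γ M .void → HasType (Γ ++ Δ) (.absurd M) T
  | fork : HasType [] .fork (.fn (.fn (.sess S) (.sess .ends)) (.sess S.dual))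
  | send : HasType [] .send (.fn (.prod T (.sess (.send T S))) (.sess S))
  | recv : HasType [] .recv (.fn (.sess (.recv T S)) (.prod T (.sess S)))
  | wait : HasType [] .wait (.fn (.sess .endr) .unit)
  | link : HasType [] .link (.fn (.prod (.sess S) (.sess S.dual)) (.sess .ends))
  | perm : List.Perm Γ Δ → HasType Γ M T → HasType Δ M T

/-! ## Evaluation contexts -/

inductive ECtx : Type
  | hole : ECtx
  | appL : ECtx → Term → ECtx
  | appR : (V : Term) → IsValue V → ECtx → ECtx
  | letu : ECtx → Term → ECtx
  | pairL : ECtx → Term → ECtx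
  | pairR : (V : Term) → IsValue V → ECtx → ECtx
  | letp : String → String → ECtx → Term → ECtx
  | inl : ECtx → ECtx
  | inr : ECtx → ECtx
  | case : ECtx → String → Term → String → Term → ECtx
  | absurd : ECtx → ECtx

def ECtx.plug : ECtx → Term → Term
  | .hole, M => M
  | .appL E N, M => .app (E.plug M) N
  | .appR V _ E, M => .app V (E.plug M)
  | .letu E N, M => .letu (E.plug M) N
  | .pairL E N, M => .pair (E.plug M) N
  | .pairR V _ E, M => .pair V (E.plug M)
  | .letp x y E N, M => .letp x y (E.plug M) N
  | .inl E, M => .inl (E.plug M)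
  | .inr E, M => .inr (E.plug M)
  | .case E x N₁ y N₂, M => .case (E.plug M) x N₁ y N₂
  | .absurd E, M => .absurd (E.plug M)

/-! ## Term reduction M ⟶_M N -/

inductive TRed : Term → Term → Prop
  | beta : IsValue V → TRed (.app (.lam x M) V) (Term.subst V x M)
  | letu : TRed (.letu .unit M) M
  | letp : IsValue V → IsValue W →
      TRed (.letp x y (.pair V W) M) (Term.subst W y (Term.subst V x M))
  | caseL : IsValue V → TRed (.case (.inl V) x M y N) (Term.subst V x M)
  | caseR : IsValue V → TRed (.case (.inr V) x M y N) (Term.subst V y N)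
  | lift : TRed M N → TRed (ECtx.plug E M) (ECtx.plug E N)
/-! ## Typed evaluation contexts: `CtxTyping Δ U E Γ T` means that a typing
derivation of `Γ ⊢ E[M] : T` decomposes around a subderivation `Δ ⊢ M : U`
sitting exactly at the position of the hole of `E`. -/

inductive CtxTyping (Δ : Env) (U : Ty) : ECtx → Env → Ty → Prop
  | hole : CtxTyping Δ U .hole Δ U
  | appL : CtxTyping Δ U E Γ (.fn T T') → Env.disj Γ Γ' → HasType Γ' N T →
      CtxTyping Δ U (.appL E N) (Γ ++ Γ') T'
  | appR : (h : IsValue V) → HasType Γ' V (.fn T T') → Env.disj Γ' Γ →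
      CtxTyping Δ U E Γ T → CtxTyping Δ U (.appR V h E) (Γ' ++ Γ) T'
  | letu : CtxTyping Δ U E Γ .unit → Env.disj Γ Γ' → HasType Γ' N T →
      CtxTyping Δ U (.letu E N) (Γ ++ Γ') T
  | pairL : CtxTyping Δ U E Γ T → Env.disj Γ Γ' → HasType Γ' N T' →
      CtxTyping Δ U (.pairL E N) (Γ ++ Γ') (.prod T T')
  | pairR : (h : IsValue V) → HasType Γ' V T → Env.disj Γ' Γ →
      CtxTyping Δ U E Γ T' → CtxTyping Δ U (.pairR V h E) (Γ' ++ Γ) (.prod T T')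
  | letp : CtxTyping Δ U E Γ (.prod T T') → Env.disj Γ Γ' →
      HasType ((x, T) :: (y, T') :: Γ') N T'' →
      CtxTyping Δ U (.letp x y E N) (Γ ++ Γ') T''
  | inl : CtxTyping Δ U E Γ T → CtxTyping Δ U (.inl E) Γ (.sum T T')
  | inr : CtxTyping Δ U E Γ T' → CtxTyping Δ U (.inr E) Γ (.sum T T')
  | case : CtxTyping Δ U E Γ (.sum T T') → Env.disj Γ Γ' →
      HasType ((x, T) :: Γ') M T'' → HasType ((y, T') :: Γ') N T'' →
      CtxTyping Δ U (.case E x M y N) (Γ ++ Γ') T''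
  | absurd : CtxTyping Δ U E Γ .void → Env.disj Γ Γ' →
      CtxTyping Δ U (.absurd E) (Γ ++ Γ') T
  | perm : List.Perm Γ Γ' → CtxTyping Δ U E Γ T → CtxTyping Δ U E Γ' T

lemma Env.disj_mono_left {Γ Γ' Δ : Env} (h : ∀ p, p ∈ Γ' → p ∈ Γ)
    (hd : Env.disj Γ Δ) : Env.disj Γ' Δ :=
  fun x T U h1 h2 => hd x T U (h (x, T) h1) h2

lemma Env.disj_symm {Γ Δ : Env} (h : Env.disj Γ Δ) : Env.disj Δ Γ :=
  fun x T U h1 h2 => h x U T h2 h1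

lemma Env.disj_append_left {A B C : Env} (h : Env.disj (A ++ B) C) :
    Env.disj A C ∧ Env.disj B C :=
  ⟨fun x T U h1 h2 => h x T U (List.mem_append.mpr (Or.inl h1)) h2,
   fun x T U h1 h2 => h x T U (List.mem_append.mpr (Or.inr h1)) h2⟩

lemma Env.disj_append {A B C : Env} (h1 : Env.disj A C) (h2 : Env.disj B C) :
    Env.disj (A ++ B) C := by
  intro x T U hm hc
  rcases List.mem_append.mp hm with h | h
  · exact h1 x T U h hc
  · exact h2 x T U h hc

lemma Env.disj_append_right {A B C : Env} (h1 : Env.disj A B) (h2 : Env.disj A C) :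
    Env.disj A (B ++ C) := by
  intro x T U hm hc
  rcases List.mem_append.mp hc with h | h
  · exact h1 x T U hm h
  · exact h2 x T U hm h

/-- If `Γ ~ Γ₀ ++ Δ` and `Γ` is disjoint from `Δ'`, so is `Γ₀`. -/
lemma Env.disj_of_perm_append {Γ Γ₀ Δ Δ' : Env} (hperm : Γ.Perm (Γ₀ ++ Δ))
    (hd : Env.disj Γ Δ') : Env.disj Γ₀ Δ' :=
  fun x T U h1 h2 =>
    hd x T U (hperm.mem_iff.mpr (List.mem_append.mpr (Or.inl h1))) h2

lemma perm_swap3 (A B C : Env) : ((A ++ B) ++ C).Perm ((A ++ C) ++ B) := by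
  simp only [List.append_assoc]
  exact List.Perm.append_left A List.perm_append_comm

/-- Key structural lemma: a typed context splits its environment (up to
permutation) into the hole part `Δ` and a frame `Γ₀`, and the hole contents
can be replaced by any term of the right type in a disjoint environment. -/
lemma ctx_replace {Δ : Env} {U : Ty} {E : ECtx} {Γ : Env} {T : Ty}
    (h : CtxTyping Δ U E Γ T) :
    ∃ Γ₀ : Env, Γ.Perm (Γ₀ ++ Δ) ∧
      ∀ (Δ' : Env) (N : Term), HasType Δ' N U → Env.disj Γ₀ Δ' →
        HasType (Γ₀ ++ Δ') (E.plug N) T := by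
  induction h with
  | hole =>
      exact ⟨[], List.Perm.refl _, fun Δ' N hN _ => hN⟩
  | appL hE hdisj hArg ih =>
      obtain ⟨Γ₀, hperm, hrep⟩ := ih
      refine ⟨Γ₀ ++ _, (hperm.append_right _).trans (perm_swap3 _ _ _), ?_⟩
      intro Δ' N hN hd
      obtain ⟨hd0, hd1⟩ := Env.disj_append_left hd
      exact HasType.perm (perm_swap3 _ _ _)
        (HasType.app (Env.disj_append (Env.disj_of_perm_append hperm hdisj)
          (Env.disj_symm hd1)) (hrep Δ' N hN hd0) hArg)
  | appR hV hVty hdisj hE ih =>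
      rename_i V G' T1 T1' G E1
      obtain ⟨Γ₀, hperm, hrep⟩ := ih
      refine ⟨G' ++ Γ₀, ?_, ?_⟩
      · rw [List.append_assoc]; exact List.Perm.append_left _ hperm
      · intro Δ' N hN hd
        obtain ⟨hd0, hd1⟩ := Env.disj_append_left hd
        have hV' := Env.disj_append_right
          (Env.disj_symm (Env.disj_of_perm_append hperm (Env.disj_symm hdisj))) hd0
        have := HasType.app hV' hVty (hrep Δ' N hN hd1)
        rwa [← List.append_assoc] at this
  | letu hE hdisj hArg ih =>
      obtain ⟨Γ₀, hperm, hrep⟩ := ih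
      refine ⟨Γ₀ ++ _, (hperm.append_right _).trans (perm_swap3 _ _ _), ?_⟩
      intro Δ' N hN hd
      obtain ⟨hd0, hd1⟩ := Env.disj_append_left hd
      exact HasType.perm (perm_swap3 _ _ _)
        (HasType.letu (Env.disj_append (Env.disj_of_perm_append hperm hdisj)
          (Env.disj_symm hd1)) (hrep Δ' N hN hd0) hArg)
  | pairL hE hdisj hArg ih =>
      obtain ⟨Γ₀, hperm, hrep⟩ := ih
      refine ⟨Γ₀ ++ _, (hperm.append_right _).trans (perm_swap3 _ _ _), ?_⟩
      intro Δ' N hN hd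
      obtain ⟨hd0, hd1⟩ := Env.disj_append_left hd
      exact HasType.perm (perm_swap3 _ _ _)
        (HasType.pair (Env.disj_append (Env.disj_of_perm_append hperm hdisj)
          (Env.disj_symm hd1)) (hrep Δ' N hN hd0) hArg)
  | pairR hV hVty hdisj hE ih =>
      rename_i V G' T1 G E1 T1'
      obtain ⟨Γ₀, hperm, hrep⟩ := ih
      refine ⟨G' ++ Γ₀, ?_, ?_⟩
      · rw [List.append_assoc]; exact List.Perm.append_left _ hperm
      · intro Δ' N hN hd
        obtain ⟨hd0, hd1⟩ := Env.disj_append_left hd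
        have hV' := Env.disj_append_right
          (Env.disj_symm (Env.disj_of_perm_append hperm (Env.disj_symm hdisj))) hd0
        have := HasType.pair hV' hVty (hrep Δ' N hN hd1)
        rwa [← List.append_assoc] at this
  | letp hE hdisj hBody ih =>
      obtain ⟨Γ₀, hperm, hrep⟩ := ih
      refine ⟨Γ₀ ++ _, (hperm.append_right _).trans (perm_swap3 _ _ _), ?_⟩
      intro Δ' N hN hd
      obtain ⟨hd0, hd1⟩ := Env.disj_append_left hd
      exact HasType.perm (perm_swap3 _ _ _)
        (HasType.letp (Env.disj_append (Env.disj_of_perm_append hperm hdisj)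
          (Env.disj_symm hd1)) (hrep Δ' N hN hd0) hBody)
  | inl hE ih =>
      obtain ⟨Γ₀, hperm, hrep⟩ := ih
      exact ⟨Γ₀, hperm, fun Δ' N hN hd => HasType.inl (hrep Δ' N hN hd)⟩
  | inr hE ih =>
      obtain ⟨Γ₀, hperm, hrep⟩ := ih
      exact ⟨Γ₀, hperm, fun Δ' N hN hd => HasType.inr (hrep Δ' N hN hd)⟩
  | case hE hdisj hM hN' ih =>
      obtain ⟨Γ₀, hperm, hrep⟩ := ih
      refine ⟨Γ₀ ++ _, (hperm.append_right _).trans (perm_swap3 _ _ _), ?_⟩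
      intro Δ' N hN hd
      obtain ⟨hd0, hd1⟩ := Env.disj_append_left hd
      exact HasType.perm (perm_swap3 _ _ _)
        (HasType.case (Env.disj_append (Env.disj_of_perm_append hperm hdisj)
          (Env.disj_symm hd1)) (hrep Δ' N hN hd0) hM hN')
  | absurd hE hdisj ih =>
      obtain ⟨Γ₀, hperm, hrep⟩ := ih
      refine ⟨Γ₀ ++ _, (hperm.append_right _).trans (perm_swap3 _ _ _), ?_⟩
      intro Δ' N hN hd
      obtain ⟨hd0, hd1⟩ := Env.disj_append_left hd
      exact HasType.perm (perm_swap3 _ _ _)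
        (HasType.absurd (Env.disj_append (Env.disj_of_perm_append hperm hdisj)
          (Env.disj_symm hd1)) (hrep Δ' N hN hd0))
  | perm hp hE ih =>
      obtain ⟨Γ₀, hperm, hrep⟩ := ih
      exact ⟨Γ₀, hp.symm.trans hperm, hrep⟩

/-- **Replacement (evaluation contexts).** If a derivation of
`Γ₁, Γ₂ ⊢ E[M] : T` has a subderivation concluding `Γ₂ ⊢ M : U` whose position
corresponds to the hole of `E` (witnessed by `CtxTyping Γ₂ U E (Γ₁ ++ Γ₂) T`),
`Γ₃ ⊢ N : U`, and `Γ₁, Γ₃` is defined, then `Γ₁, Γ₃ ⊢ E[N] : T`. -/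
theorem replacement (Γ₁ Γ₂ Γ₃ : Env) (E : ECtx) (M N : Term) (T U : Ty)
    (hD : HasType (Γ₁ ++ Γ₂) (ECtx.plug E M) T)
    (hsub : HasType Γ₂ M U)
    (hpos : CtxTyping Γ₂ U E (Γ₁ ++ Γ₂) T)
    (hN : HasType Γ₃ N U)
    (hdef : Env.disj Γ₁ Γ₃) :
    HasType (Γ₁ ++ Γ₃) (ECtx.plug E N) T := by
  obtain ⟨Γ₀, hperm, hrep⟩ := ctx_replace hpos
  have hΓ : Γ₁.Perm Γ₀ := (List.perm_append_right_iff Γ₂).mp hperm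
  have hd0 : Env.disj Γ₀ Γ₃ :=
    Env.disj_mono_left (fun p hp => hΓ.mem_iff.mpr hp) hdef
  exact HasType.perm ((hΓ.symm).append_right Γ₃) (hrep Γ₃ N hN hd0)
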